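/- Turning-angle perturbation estimate: Let ν̂ ∈ ℝ² be a unit vector, h ∈ ℝ² with |h| ≤ 1/2, and define ν = (ν̂ + h)/|ν̂ + h|. Write θ = arg(ν), θ̂ = arg(ν̂). Then for two unit vectors ν̂⁺, ν̂⁻ and the same perturbation vector h (with |h| ≤ 1/2), the resulting angles satisfy |θ⁺ − θ⁻| ≤ (1 + 6|h|)·|θ̂⁺ − θ̂⁻|. -/

import Mathlib

open Complex Real

private lemma znorm (h : ℂ) (φ : ℝ) : ‖h * Complex.exp (-(φ:ℂ) * Complex.I)‖ = ‖h‖ := by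
  rw [norm_mul, Complex.norm_exp]
  simp

private lemma norm_w_lb (h : ℂ) (hh : ‖h‖ ≤ 1 / 2) (φ : ℝ) :
    (1:ℝ)/2 ≤ (1 + h * Complex.exp (-(φ:ℂ) * Complex.I)).re := by
  set z := h * Complex.exp (-(φ:ℂ) * Complex.I) with hz
  have h1 : ‖z‖ = ‖h‖ := znorm h φ
  have h2 := Complex.abs_re_le_norm z
  simp only [Complex.add_re, Complex.one_re]
  rw [h1] at h2
  have := neg_abs_le z.re
  linarith

private lemma key_eq (h : ℂ) (hh : ‖h‖ ≤ 1 / 2) (θ φ : ℝ)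
    (he : Complex.exp (θ * Complex.I) =
      (Complex.exp (φ * Complex.I) + h) / ((‖Complex.exp (φ * Complex.I) + h‖ : ℝ) : ℂ))
    (hb : |θ - φ| < Real.pi / 2) :
    θ = φ + (1 + h * Complex.exp (-(φ:ℂ) * Complex.I)).arg := by
  set w : ℂ := 1 + h * Complex.exp (-(φ:ℂ) * Complex.I) with hw
  have hre : (1:ℝ)/2 ≤ w.re := norm_w_lb h hh φ
  have hw0 : w ≠ 0 := by
    intro h0
    rw [h0] at hre; simp at hre; linarith
  have hfac : Complex.exp (φ * Complex.I) + h = Complex.exp (φ * Complex.I) * w := by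
    rw [hw, mul_add, mul_one, ← mul_assoc, mul_comm (Complex.exp (φ * Complex.I)) h,
      mul_assoc, ← Complex.exp_add]
    ring_nf
    simp
  have hnorm : ‖Complex.exp (φ * Complex.I) * w‖ = ‖w‖ := by
    rw [norm_mul]
    simp [Complex.norm_exp_ofReal_mul_I]
  have hwa : (‖w‖ : ℂ) * Complex.exp (w.arg * Complex.I) = w :=
    Complex.norm_mul_exp_arg_mul_I w
  have habs0 : (‖w‖ : ℂ) ≠ 0 := by
    simpa using (norm_ne_zero_iff.mpr hw0)
  have he2 : Complex.exp (θ * Complex.I) = Complex.exp ((φ + w.arg) * Complex.I) := by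
    rw [he, hfac, hnorm]
    rw [mul_div_assoc]
    have : w / (‖w‖ : ℂ) = Complex.exp (w.arg * Complex.I) := by
      rw [eq_comm, eq_div_iff habs0, mul_comm]
      exact hwa
    rw [this, ← Complex.exp_add]
    push_cast
    ring_nf
  rw [Complex.exp_eq_exp_iff_exists_int] at he2
  obtain ⟨n, hn⟩ := he2
  have hreal : (θ : ℝ) = φ + w.arg + n * (2 * Real.pi) := by
    have := congrArg Complex.im hn
    simpa [Complex.mul_I_im, Complex.add_im, Complex.mul_im] using this
  have harg : |w.arg| < Real.pi / 2 := by
    rw [Complex.abs_arg_lt_pi_div_two_iff]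
    left; linarith
  have hn0 : n = 0 := by
    by_contra hne
    have h1 : (1:ℝ) ≤ |(n:ℝ)| := by
      rw [← Int.cast_abs]
      exact_mod_cast Int.one_le_abs (by exact_mod_cast hne)
    have hd : θ - φ - w.arg = n * (2 * Real.pi) := by linarith
    have hlt : |θ - φ - w.arg| < Real.pi := by
      calc |θ - φ - w.arg| ≤ |θ - φ| + |w.arg| := abs_sub _ _
        _ < Real.pi / 2 + Real.pi / 2 := by linarith [abs_nonneg w.arg]
        _ = Real.pi := by ring
    rw [hd, abs_mul] at hlt
    have hpi := Real.pi_pos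
    rw [abs_of_pos (by linarith : (0:ℝ) < 2 * Real.pi)] at hlt
    nlinarith
  rw [hn0] at hreal
  simpa using hreal

private lemma lip (h : ℂ) (hh : ‖h‖ ≤ 1 / 2) (a b : ℝ) :
    |(1 + h * Complex.exp (-(a:ℂ) * Complex.I)).arg -
      (1 + h * Complex.exp (-(b:ℂ) * Complex.I)).arg| ≤ 6 * ‖h‖ * |a - b| := by
  set F : ℝ → ℝ := fun φ => (Complex.log (1 + h * Complex.exp (-(φ:ℂ) * Complex.I))).im with hF
  set F' : ℝ → ℝ := fun φ =>
    ((h * (Complex.exp (-(φ:ℂ) * Complex.I) * -Complex.I)) /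
      (1 + h * Complex.exp (-(φ:ℂ) * Complex.I))).im with hF'
  have hre : ∀ φ : ℝ, (1:ℝ)/2 ≤ (1 + h * Complex.exp (-(φ:ℂ) * Complex.I)).re :=
    norm_w_lb h hh
  have hmem : ∀ φ : ℝ, (1 + h * Complex.exp (-(φ:ℂ) * Complex.I)) ∈ Complex.slitPlane := by
    intro φ
    rw [Complex.mem_slitPlane_iff]
    left; linarith [hre φ]
  have hw0 : ∀ φ : ℝ, (1 + h * Complex.exp (-(φ:ℂ) * Complex.I)) ≠ 0 := by
    intro φ h0
    have := hre φ
    rw [h0] at this; simp at this; linarith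
  have hderiv : ∀ φ : ℝ, HasDerivAt F (F' φ) φ := by
    intro φ
    have hd1 : HasDerivAt (fun φ:ℝ => ((φ:ℂ))) 1 φ := by
      simpa using (hasDerivAt_id φ).ofReal_comp
    have hd2 : HasDerivAt (fun φ:ℝ => -(φ:ℂ) * Complex.I) (-Complex.I) φ := by
      simpa using (hd1.neg.mul_const Complex.I)
    have hd3 : HasDerivAt (fun φ:ℝ => Complex.exp (-(φ:ℂ) * Complex.I))
        (Complex.exp (-(φ:ℂ) * Complex.I) * -Complex.I) φ := hd2.cexp
    have hd4 : HasDerivAt (fun φ:ℝ => 1 + h * Complex.exp (-(φ:ℂ) * Complex.I))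
        (h * (Complex.exp (-(φ:ℂ) * Complex.I) * -Complex.I)) φ :=
      (hd3.const_mul h).const_add 1
    have hd5 := hd4.clog_real (hmem φ)
    have hd6 := Complex.imCLM.hasFDerivAt.comp_hasDerivAt φ hd5
    exact hd6
  have hbound : ∀ φ : ℝ, ‖F' φ‖ ≤ 6 * ‖h‖ := by
    intro φ
    set w := 1 + h * Complex.exp (-(φ:ℂ) * Complex.I) with hw
    set g := h * (Complex.exp (-(φ:ℂ) * Complex.I) * -Complex.I) with hg
    have hgabs : ‖g‖ = ‖h‖ := by
      rw [hg, ← mul_assoc, norm_mul]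
      have h1 : ‖(h * Complex.exp (-(φ:ℂ) * Complex.I))‖ = ‖h‖ := znorm h φ
      rw [h1]; simp
    have hwabs : (1:ℝ)/2 ≤ ‖w‖ := le_trans (hre φ) (Complex.re_le_norm w)
    have h1 : ‖F' φ‖ ≤ ‖g / w‖ := by
      rw [Real.norm_eq_abs]
      exact Complex.abs_im_le_norm _
    have h2 : ‖g / w‖ = ‖h‖ / ‖w‖ := by
      rw [norm_div, hgabs]
    have h3 : ‖h‖ / ‖w‖ ≤ ‖h‖ / (1/2) :=
      div_le_div_of_nonneg_left (norm_nonneg h) (by linarith) hwabs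
    have : ‖h‖ / (1/2) = 2 * ‖h‖ := by ring
    rw [h2] at h1
    linarith [norm_nonneg h, h1, h3]
  have hmvt := Convex.norm_image_sub_le_of_norm_hasDerivWithin_le
    (f := F) (f' := F') (s := Set.univ) (C := 6 * ‖h‖)
    (fun x _ => (hderiv x).hasDerivWithinAt) (fun x _ => hbound x) convex_univ
    (Set.mem_univ b) (Set.mem_univ a)
  have hFeq : ∀ φ : ℝ, F φ = (1 + h * Complex.exp (-(φ:ℂ) * Complex.I)).arg := by
    intro φ; rw [hF]; exact Complex.log_im _
  rw [Real.norm_eq_abs, Real.norm_eq_abs, hFeq a, hFeq b] at hmvt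
  exact hmvt

theorem stmt_19 (h : ℂ) (hh : ‖h‖ ≤ 1 / 2)
    (θp θm θhp θhm : ℝ)
    (hne1 : Complex.exp (θhp * Complex.I) + h ≠ 0)
    (hne2 : Complex.exp (θhm * Complex.I) + h ≠ 0)
    (he1 : Complex.exp (θp * Complex.I) =
      (Complex.exp (θhp * Complex.I) + h) / ((‖Complex.exp (θhp * Complex.I) + h‖ : ℝ) : ℂ))
    (he2 : Complex.exp (θm * Complex.I) =
      (Complex.exp (θhm * Complex.I) + h) / ((‖Complex.exp (θhm * Complex.I) + h‖ : ℝ) : ℂ))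
    (hb1 : |θp - θhp| < Real.pi / 2) (hb2 : |θm - θhm| < Real.pi / 2) :
    |θp - θm| ≤ (1 + 6 * ‖h‖) * |θhp - θhm| := by
  have e1 := key_eq h hh θp θhp he1 hb1
  have e2 := key_eq h hh θm θhm he2 hb2
  have hl := lip h hh θhp θhm
  have hnn : 0 ≤ ‖h‖ := norm_nonneg h
  have hsum : θp - θm = (θhp - θhm) +
      ((1 + h * Complex.exp (-(θhp:ℂ) * Complex.I)).arg -
       (1 + h * Complex.exp (-(θhm:ℂ) * Complex.I)).arg) := by
    rw [e1, e2]; ring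
  calc |θp - θm| ≤ |θhp - θhm| +
      |(1 + h * Complex.exp (-(θhp:ℂ) * Complex.I)).arg -
       (1 + h * Complex.exp (-(θhm:ℂ) * Complex.I)).arg| := by
        rw [hsum]; exact abs_add_le _ _
    _ ≤ |θhp - θhm| + 6 * ‖h‖ * |θhp - θhm| := by linarith
    _ = (1 + 6 * ‖h‖) * |θhp - θhm| := by ring
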